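/- arXiv:2003.04392 — 2 statements merged into one kernel-verified Lean document; each statement's English description precedes it below -/
import Mathlib

section
/- Let p be a prime, k ≥ 1, n = p^k, and let c : Z_n → Z_n be a p-good coloring. Let a, b be integers with p dividing b. Then the sum c(a) + c(a+b) + ... + c(a + (n/p - 1)b), computed in Z_n with arguments reduced modulo n, is a multiple of n/p in Z_n. -/
lemma sum_range_mul' {M : Type*} [AddCommMonoid M] (f : ℕ → M) (m n : ℕ) :
    ∑ i ∈ Finset.range (m * n), f i
      = ∑ q ∈ Finset.range n, ∑ r ∈ Finset.range m, f (q * m + r) := by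
  induction n with
  | zero => simp
  | succ n ih =>
      rw [Nat.mul_succ, Finset.sum_range_add, ih, Finset.sum_range_succ]
      congr 1
      apply Finset.sum_congr rfl
      intro r _
      congr 1
      ring

lemma cast_red (p e : ℕ) [NeZero p] (m : ℤ) :
    ((m * p ^ e : ℤ) : ZMod (p ^ (e + 1)))
      = (((m : ZMod p).val * p ^ e : ℕ) : ZMod (p ^ (e + 1))) := by
  have h1 : (p : ℤ) ∣ m - ((m : ZMod p).val : ℤ) := by
    rw [← ZMod.intCast_zmod_eq_zero_iff_dvd]
    push_cast
    simp [ZMod.natCast_val, ZMod.cast_id]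
  obtain ⟨w, hw⟩ := h1
  set v := ((m : ZMod p)).val with hv
  have hm : m = (v : ℤ) + p * w := by linarith
  have h2 : (m * p ^ e : ℤ)
      = ((v * p ^ e : ℕ) : ℤ) + w * ((p ^ (e + 1) : ℕ) : ℤ) := by
    rw [hm]; push_cast; ring
  rw [h2, Int.cast_add]
  have h3 : ((w * ((p ^ (e + 1) : ℕ) : ℤ) : ℤ) : ZMod (p ^ (e + 1))) = 0 := by
    rw [ZMod.intCast_zmod_eq_zero_iff_dvd]
    exact Dvd.intro_left w rfl
  rw [h3, add_zero, Int.cast_natCast]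

lemma sum_range_natCast_zmod {M : Type*} [AddCommMonoid M] (p : ℕ) [NeZero p]
    (G : ZMod p → M) :
    ∑ t ∈ Finset.range p, G (t : ZMod p) = ∑ z : ZMod p, G z :=
  Finset.sum_nbij' (fun t => ((t : ZMod p))) ZMod.val
    (fun t _ => Finset.mem_univ _)
    (fun z _ => Finset.mem_range.mpr (ZMod.val_lt z))
    (fun t ht => ZMod.val_cast_of_lt (Finset.mem_range.mp ht))
    (fun z _ => ZMod.natCast_rightInverse z)
    (fun t _ => rfl)

lemma inner_zero (p e : ℕ) (hp : p.Prime)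
    (c : ZMod (p ^ (e + 1)) → ZMod (p ^ (e + 1)))
    (hc : ∀ a : ZMod (p ^ (e + 1)),
      ∑ i ∈ Finset.range p, c (a + ((i * p ^ e : ℕ) : ZMod (p ^ (e + 1)))) = 0)
    (X : ZMod (p ^ (e + 1))) (u : ℤ) (hu : ¬ (p : ℤ) ∣ u) :
    ∑ t ∈ Finset.range p, c (X + (((t : ℤ) * u * p ^ e : ℤ) : ZMod (p ^ (e + 1)))) = 0 := by
  haveI : Fact p.Prime := ⟨hp⟩
  set G : ZMod p → ZMod (p ^ (e + 1)) :=
    fun z => c (X + ((z.val * p ^ e : ℕ) : ZMod (p ^ (e + 1)))) with hG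
  have hu' : (u : ZMod p) ≠ 0 := by
    rwa [Ne, ZMod.intCast_zmod_eq_zero_iff_dvd]
  have step1 : ∀ t : ℕ,
      c (X + (((t : ℤ) * u * p ^ e : ℤ) : ZMod (p ^ (e + 1)))) = G ((t : ZMod p) * (u : ZMod p)) := by
    intro t
    rw [hG]
    have := cast_red p e ((t : ℤ) * u)
    simp only [this]
    push_cast
    ring_nf
  calc ∑ t ∈ Finset.range p, c (X + (((t : ℤ) * u * p ^ e : ℤ) : ZMod (p ^ (e + 1))))
      = ∑ t ∈ Finset.range p, (fun z : ZMod p => G (z * u)) (t : ZMod p) := by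
        exact Finset.sum_congr rfl fun t _ => step1 t
    _ = ∑ z : ZMod p, G (z * u) := by exact sum_range_natCast_zmod p (fun z => G (z * u))
    _ = ∑ z : ZMod p, G z := Fintype.sum_equiv (Equiv.mulRight₀ (u : ZMod p) hu') _ _ (fun z => rfl)
    _ = ∑ t ∈ Finset.range p, G (t : ZMod p) := (sum_range_natCast_zmod p _).symm
    _ = ∑ t ∈ Finset.range p, c (X + ((t * p ^ e : ℕ) : ZMod (p ^ (e + 1)))) := by
        apply Finset.sum_congr rfl
        intro t ht
        show c (X + ((((t : ZMod p).val * p ^ e : ℕ)) : ZMod (p ^ (e + 1)))) = _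
        congr 2
        have h := cast_red p e (t : ℤ)
        exact_mod_cast h.symm
    _ = 0 := hc X
/-- For a prime `p`, `n = p^k`, a `p`-good coloring `c` and `p ∣ b`,
the sum of `c` along `a, a+b, …, a+(n/p - 1)b` (mod `n`) is a multiple of
`n/p = p^(k-1)` in `ZMod n`. -/
theorem p_good_coloring_partial_progression (p : ℕ) (hp : p.Prime) (k : ℕ) (hk : 1 ≤ k)
    (c : ZMod (p ^ k) → ZMod (p ^ k))
    (hc : ∀ a : ZMod (p ^ k),
      ∑ i ∈ Finset.range p, c (a + ((i * p ^ (k - 1) : ℕ) : ZMod (p ^ k))) = 0)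
    (a b : ℤ) (hb : (p : ℤ) ∣ b) :
    ∃ m : ZMod (p ^ k),
      ∑ i ∈ Finset.range (p ^ (k - 1)), c (((a + (i : ℤ) * b : ℤ) : ZMod (p ^ k)))
        = m * ((p ^ (k - 1) : ℕ) : ZMod (p ^ k)) := by
  classical
  haveI : Fact p.Prime := ⟨hp⟩
  obtain ⟨e, rfl⟩ : ∃ e, k = e + 1 := ⟨k - 1, by omega⟩
  simp only [Nat.add_sub_cancel] at hc ⊢
  by_cases hpk : (p : ℤ) ^ (e + 1) ∣ b
  · refine ⟨c ((a : ℤ) : ZMod (p ^ (e + 1))), ?_⟩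
    have hb0 : ((b : ℤ) : ZMod (p ^ (e + 1))) = 0 := by
      rw [ZMod.intCast_zmod_eq_zero_iff_dvd]
      exact_mod_cast hpk
    have hterm : ∀ i ∈ Finset.range (p ^ e),
        c (((a + (i : ℤ) * b : ℤ) : ZMod (p ^ (e + 1)))) = c ((a : ℤ) : ZMod (p ^ (e + 1))) := by
      intro i _
      congr 1
      push_cast
      rw [hb0]
      ring
    rw [Finset.sum_congr rfl hterm, Finset.sum_const, Finset.card_range, nsmul_eq_mul]
    push_cast
    ring
  · refine ⟨0, ?_⟩
    rw [zero_mul]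
    set j := Nat.findGreatest (fun t => (p : ℤ) ^ t ∣ b) (e + 1) with hj
    have hbP : (fun t => (p : ℤ) ^ t ∣ b) 1 := by simpa using hb
    have hj1 : 1 ≤ j := Nat.le_findGreatest (by omega) hbP
    have hjspec : (p : ℤ) ^ j ∣ b := by
      rw [hj]
      exact Nat.findGreatest_spec (P := fun t => (p : ℤ) ^ t ∣ b) (n := e + 1) (m := 1)
        (by omega) hbP
    have hjlt : j < e + 1 := by
      rcases Nat.lt_or_ge j (e + 1) with h | h
      · exact h
      · exfalso
        apply hpk
        have hje : j = e + 1 := le_antisymm (Nat.findGreatest_le _) h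
        rwa [hje] at hjspec
    have hnot : ¬ (p : ℤ) ^ (j + 1) ∣ b := by
      rw [hj]
      exact Nat.findGreatest_is_greatest (P := fun t => (p : ℤ) ^ t ∣ b) (n := e + 1)
        (k := Nat.findGreatest (fun t => (p : ℤ) ^ t ∣ b) (e + 1) + 1) (by omega) (by omega)
    obtain ⟨u, hbu⟩ := hjspec
    have hu : ¬ (p : ℤ) ∣ u := by
      rintro ⟨w, hw⟩
      exact hnot ⟨w, by rw [hbu, hw, pow_succ]; ring⟩
    obtain ⟨j', d, hj', hd⟩ : ∃ j' d, j = j' + 1 ∧ e = d + j := ⟨j - 1, e - j, by omega, by omega⟩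
    have hpe : (p : ℤ) ^ e = (p : ℤ) ^ d * (p : ℤ) ^ (j' + 1) := by
      rw [← pow_add]; congr 1; omega
    have hpk' : (p : ℤ) ^ (e + 1) = (p : ℤ) ^ d * p * (p : ℤ) ^ (j' + 1) := by
      rw [show e + 1 = (d + 1) + (j' + 1) from by omega, pow_add, pow_succ]
    have hsplit : p ^ e = p ^ d * (p * p ^ j') := by
      rw [show p * p ^ j' = p ^ (j' + 1) from by rw [pow_succ]; ring, ← pow_add]
      congr 1; omega
    rw [hsplit, sum_range_mul', sum_range_mul']
    apply Finset.sum_eq_zero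
    intro q1 _
    rw [Finset.sum_comm]
    apply Finset.sum_eq_zero
    intro r _
    have key : ∀ q0 : ℕ,
        (((a + (((q1 * p + q0) * p ^ d + r : ℕ) : ℤ) * b : ℤ)) : ZMod (p ^ (e + 1)))
          = ((a + (r : ℤ) * b : ℤ) : ZMod (p ^ (e + 1)))
            + (((q0 : ℤ) * u * p ^ e : ℤ) : ZMod (p ^ (e + 1))) := by
      intro q0
      have hint : (a + (((q1 * p + q0) * p ^ d + r : ℕ) : ℤ) * b : ℤ)
          = (a + (r : ℤ) * b) + ((q0 : ℤ) * u * p ^ e)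
            + ((q1 : ℤ) * (u * (p : ℤ) ^ (e + 1))) := by
        push_cast
        rw [hbu, hj', hpe, hpk']
        ring
      rw [hint, Int.cast_add, Int.cast_add]
      have hz : (((q1 : ℤ) * (u * (p : ℤ) ^ (e + 1)) : ℤ) : ZMod (p ^ (e + 1))) = 0 := by
        rw [ZMod.intCast_zmod_eq_zero_iff_dvd]
        exact ⟨(q1 : ℤ) * u, by push_cast; ring⟩
      rw [hz, add_zero]
    calc ∑ q0 ∈ Finset.range p,
          c (((a + (((q1 * p + q0) * p ^ d + r : ℕ) : ℤ) * b : ℤ)) : ZMod (p ^ (e + 1)))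
        = ∑ q0 ∈ Finset.range p,
            c (((a + (r : ℤ) * b : ℤ) : ZMod (p ^ (e + 1)))
              + (((q0 : ℤ) * u * p ^ e : ℤ) : ZMod (p ^ (e + 1)))) := by
          exact Finset.sum_congr rfl fun q0 _ => by rw [key q0]
      _ = 0 := inner_zero p e hp c hc _ u hu
end

section
/- Let u₁ = x, v₁ = y, and u_{i+1} = u_i v_i, v_{i+1} = v_i u_i in the free group F₂ on x, y. Then for every m ≥ 3, the word u_m v_m^{-1} lies in F₂' and its winding invariant equals (1 − X^{2^{m−3}} Y^{2^{m−3}})(1 − X^{2^{m−4}} Y^{2^{m−4}}) ⋯ (1 − XY). -/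
/-- The free group on two generators `x = of true`, `y = of false`. -/
abbrev F2 := FreeGroup Bool
/-- The generator `x`. -/
def xx : F2 := FreeGroup.of true
/-- The generator `y`. -/
def yy : F2 := FreeGroup.of false
/-- The ring of Laurent polynomials `ℤ[X^{±1}, Y^{±1}]`. -/
abbrev L := AddMonoidAlgebra ℤ (ℤ × ℤ)
/-- The monomial `X^i Y^j`. -/
noncomputable def mono (i j : ℤ) : L := AddMonoidAlgebra.single (i, j) 1
/-- Total exponent of `x` in a word of `F2`. -/
def expx (u : F2) : ℤ :=
  Multiplicative.toAdd (FreeGroup.lift (fun b => Multiplicative.ofAdd (if b then (1 : ℤ) else 0)) u)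
/-- Total exponent of `y` in a word of `F2`. -/
def expy (u : F2) : ℤ :=
  Multiplicative.toAdd (FreeGroup.lift (fun b => Multiplicative.ofAdd (if b then (0 : ℤ) else 1)) u)

/-- The Morse words: `morse (m-1) = (u_m, v_m)` with `u₁ = x`, `v₁ = y`,
`u_{i+1} = u_i v_i`, `v_{i+1} = v_i u_i`. -/
def morse : ℕ → F2 × F2
  | 0 => (xx, yy)
  | m + 1 => ((morse m).1 * (morse m).2, (morse m).2 * (morse m).1)

open scoped commutatorElement

lemma expx_mul (a b : F2) : expx (a * b) = expx a + expx b := by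
  simp [expx, map_mul, toAdd_mul]

lemma expy_mul (a b : F2) : expy (a * b) = expy a + expy b := by
  simp [expy, map_mul, toAdd_mul]

lemma exps : ∀ n : ℕ, expx ((morse n).1 * (morse n).2) = 2 ^ n ∧
    expy ((morse n).1 * (morse n).2) = 2 ^ n := by
  intro n
  induction n with
  | zero => simp [morse, expx, expy, xx, yy, expx_mul, expy_mul, FreeGroup.lift_apply_of]
  | succ n ih =>
    obtain ⟨h1, h2⟩ := ih
    constructor
    · show expx ((morse n).1 * (morse n).2 * ((morse n).2 * (morse n).1)) = _
      rw [expx_mul, expx_mul, expx_mul] at *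
      push_cast [pow_succ] at *
      linarith
    · show expy ((morse n).1 * (morse n).2 * ((morse n).2 * (morse n).1)) = _
      rw [expy_mul, expy_mul, expy_mul] at *
      push_cast [pow_succ] at *
      linarith

lemma mono_mul (a b c d : ℤ) : mono a b * mono c d = mono (a + c) (b + d) := by
  simp [mono, AddMonoidAlgebra.single_mul_single, Prod.mk_add_mk]

lemma mono_pow (k : ℕ) : mono 1 1 ^ k = mono k k := by
  induction k with
  | zero =>
    simp [mono]
    rfl
  | succ k ih =>
    rw [pow_succ, ih, mono_mul]
    push_cast
    ring_nf


lemma morse_mem (n : ℕ) : ⁅(morse n).1, (morse n).2⁆ ∈ commutator F2 :=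
  Subgroup.commutator_mem_commutator (Subgroup.mem_top _) (Subgroup.mem_top _)

lemma main_ind
    (W : commutator F2 → L)
    (hadd : ∀ z w : commutator F2, W (z * w) = W z + W w)
    (hcomm : ∀ h : ⁅xx, yy⁆ ∈ commutator F2, W ⟨⁅xx, yy⁆, h⟩ = 1)
    (hconj : ∀ (u : F2) (z : commutator F2) (h : u * ↑z * u⁻¹ ∈ commutator F2),
      W ⟨u * ↑z * u⁻¹, h⟩ = mono (expx u) (expy u) * W z) :
    ∀ n : ℕ, ∀ h : ⁅(morse n).1, (morse n).2⁆ ∈ commutator F2,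
      W ⟨⁅(morse n).1, (morse n).2⁆, h⟩ =
        ∏ t ∈ Finset.range n, (1 - (mono 1 1) ^ (2 ^ t)) := by
  have hW1 : W 1 = 0 := by
    have := hadd 1 1
    simpa using this.symm
  have hWinv : ∀ z : commutator F2, W z⁻¹ = - W z := by
    intro z
    have h := hadd z⁻¹ z
    rw [inv_mul_cancel, hW1] at h
    exact eq_neg_of_add_eq_zero_left h.symm
  intro n
  induction n with
  | zero =>
    intro h
    simpa [morse] using hcomm h
  | succ n ih =>
    intro h
    set u := (morse n).1 with hu
    set v := (morse n).2 with hv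
    set p := u * v with hp
    have hmemc : ⁅u, v⁆ ∈ commutator F2 := morse_mem n
    set z : commutator F2 := ⟨⁅u, v⁆, hmemc⟩ with hz
    have hconjmem : p * (↑(z⁻¹) : F2) * p⁻¹ ∈ commutator F2 :=
      (Subgroup.commutator_normal ⊤ ⊤).conj_mem _ (z⁻¹).2 p
    have key : (⟨⁅(morse (n+1)).1, (morse (n+1)).2⁆, h⟩ : commutator F2)
        = ⟨p * (↑(z⁻¹) : F2) * p⁻¹, hconjmem⟩ * z := by
      apply Subtype.ext
      show ⁅u * v, v * u⁆ = (p * (↑(z⁻¹) : F2) * p⁻¹) * ↑z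
      simp only [hz, hp, InvMemClass.coe_inv]
      simp only [commutatorElement_def]
      group
    rw [key, hadd, hconj p (z⁻¹) hconjmem, hWinv z, ih hmemc]
    obtain ⟨hex, hey⟩ := exps n
    rw [← hp] at hex hey
    rw [hex, hey, Finset.prod_range_succ]
    have : mono (2 ^ n) (2 ^ n) = mono 1 1 ^ (2 ^ n) := by
      rw [mono_pow]; push_cast; ring_nf
    rw [this]
    ring

/-- For `m ≥ 3`, the word `u_m v_m⁻¹` lies in `F₂'` and its
winding invariant is `(1 - (XY)^{2^{m-3}})(1 - (XY)^{2^{m-4}}) ⋯ (1 - XY)`. -/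
theorem winding_of_morse_words
    (W : commutator F2 → L)
    (hadd : ∀ z w : commutator F2, W (z * w) = W z + W w)
    (hcomm : ∀ h : ⁅xx, yy⁆ ∈ commutator F2, W ⟨⁅xx, yy⁆, h⟩ = 1)
    (hconj : ∀ (u : F2) (z : commutator F2) (h : u * ↑z * u⁻¹ ∈ commutator F2),
      W ⟨u * ↑z * u⁻¹, h⟩ = mono (expx u) (expy u) * W z) :
    ∀ m : ℕ, 3 ≤ m →
      ∃ h : (morse (m - 1)).1 * ((morse (m - 1)).2)⁻¹ ∈ commutator F2,
        W ⟨(morse (m - 1)).1 * ((morse (m - 1)).2)⁻¹, h⟩ =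
          ∏ t ∈ Finset.range (m - 2), (1 - (mono 1 1) ^ (2 ^ t)) := by
  intro m hm
  obtain ⟨n, rfl⟩ : ∃ n, m = n + 3 := ⟨m - 3, by omega⟩
  have heq : (morse (n + 3 - 1)).1 * ((morse (n + 3 - 1)).2)⁻¹
      = ⁅(morse (n + 1)).1, (morse (n + 1)).2⁆ := by
    show ((morse (n+1)).1 * (morse (n+1)).2) * ((morse (n+1)).2 * (morse (n+1)).1)⁻¹ = _
    simp only [commutatorElement_def]
    group
  refine ⟨heq ▸ morse_mem (n + 1), ?_⟩
  have hsub : (⟨(morse (n + 3 - 1)).1 * ((morse (n + 3 - 1)).2)⁻¹, heq ▸ morse_mem (n + 1)⟩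
      : commutator F2) = ⟨⁅(morse (n + 1)).1, (morse (n + 1)).2⁆, morse_mem (n + 1)⟩ :=
    Subtype.ext heq
  rw [hsub]
  exact main_ind W hadd hcomm hconj (n + 1) (morse_mem (n + 1))
end
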